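/- Define ρ(m) = μ((m,∞))²/(μ*μ)([2m,∞)) − (1−r) and ρ⁺(m) = lim_{q→m⁻} ρ(q). Then ρ(x) ≤ ρ⁺(x) for all x, with strict inequality if and only if μ({x}) > 0. -/

import Mathlib

open MeasureTheory Set Filter Topology

theorem rho_le_rhoPlus_iff_atom
    (μ : Measure ℝ) [IsProbabilityMeasure μ] (r : ℝ) (hr : r ∈ Ioo (0:ℝ) 1)
    (ρ : ℝ → ℝ)
    (hρ : ρ = fun m : ℝ =>
      (μ (Ioi m)).toReal ^ 2
          / ((μ.prod μ) {q : ℝ × ℝ | 2 * m ≤ q.1 + q.2}).toReal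
        - (1 - r))
    (x : ℝ)
    (hden : (μ.prod μ) {q : ℝ × ℝ | 2 * x ≤ q.1 + q.2} ≠ 0)
    (L : ℝ) (hlim : Tendsto ρ (nhdsWithin x (Iio x)) (nhds L)) :
    ρ x ≤ L ∧ (ρ x < L ↔ 0 < μ {x}) := by
  set D := ((μ.prod μ) {q : ℝ × ℝ | 2 * x ≤ q.1 + q.2}).toReal with hDdef
  have hDpos : 0 < D := ENNReal.toReal_pos hden (measure_ne_top _ _)
  set s : ℕ → ℝ := fun n => x - 1 / (n + 1) with hs
  have hslt : ∀ n, s n < x := by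
    intro n
    have : (0:ℝ) < 1 / (n + 1) := by positivity
    simp only [hs]; linarith
  have honetend : Tendsto (fun n : ℕ => 1 / ((n:ℝ) + 1)) atTop (𝓝 0) :=
    tendsto_one_div_add_atTop_nhds_zero_nat
  have hstend : Tendsto s atTop (𝓝 x) := by
    have := tendsto_const_nhds.sub honetend (f := fun _ : ℕ => x)
    simpa [hs] using this
  have hmono : Monotone s := by
    intro n m hnm
    have h1 : ((n:ℝ)+1) ≤ (m:ℝ)+1 := by exact_mod_cast Nat.succ_le_succ hnm
    have h2 := one_div_le_one_div_of_le (by positivity : (0:ℝ) < (n:ℝ)+1) h1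
    simp only [hs]; linarith
  have hsub : Tendsto s atTop (𝓝[<] x) :=
    tendsto_nhdsWithin_of_tendsto_nhds_of_eventually_within s hstend
      (Eventually.of_forall hslt)
  have hL : Tendsto (fun n => ρ (s n)) atTop (𝓝 L) := hlim.comp hsub
  -- numerator limit
  have hIoi : (⋂ n, Ioi (s n)) = Ici x := by
    ext y
    simp only [mem_iInter, mem_Ioi, mem_Ici]
    constructor
    · intro h
      exact le_of_tendsto hstend (Eventually.of_forall fun n => (h n).le)
    · intro h n; exact lt_of_lt_of_le (hslt n) h
  have hnum : Tendsto (fun n => μ (Ioi (s n))) atTop (𝓝 (μ (Ici x))) := by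
    have := tendsto_measure_iInter_atTop (μ := μ) (s := fun n => Ioi (s n))
      (fun n => measurableSet_Ioi.nullMeasurableSet)
      (fun n m h => Ioi_subset_Ioi (hmono h)) ⟨0, measure_ne_top _ _⟩
    rw [hIoi] at this
    exact this
  have hnumR : Tendsto (fun n => (μ (Ioi (s n))).toReal) atTop
      (𝓝 (μ (Ici x)).toReal) :=
    (ENNReal.tendsto_toReal (measure_ne_top _ _)).comp hnum
  -- denominator limit
  have hBmeas : ∀ m : ℝ, MeasurableSet {q : ℝ × ℝ | 2 * m ≤ q.1 + q.2} := by
    intro m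
    exact measurableSet_le measurable_const (measurable_fst.add measurable_snd)
  have hBinter : (⋂ n, {q : ℝ × ℝ | 2 * s n ≤ q.1 + q.2})
      = {q : ℝ × ℝ | 2 * x ≤ q.1 + q.2} := by
    ext q
    simp only [mem_iInter, mem_setOf_eq]
    constructor
    · intro h
      have h2 : Tendsto (fun n => 2 * s n) atTop (𝓝 (2 * x)) :=
        (hstend.const_mul 2)
      exact le_of_tendsto h2 (Eventually.of_forall h)
    · intro h n
      have : 2 * s n ≤ 2 * x := by have := (hslt n).le; linarith
      linarith
  have hden' : Tendsto (fun n => (μ.prod μ) {q : ℝ × ℝ | 2 * s n ≤ q.1 + q.2})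
      atTop (𝓝 ((μ.prod μ) {q : ℝ × ℝ | 2 * x ≤ q.1 + q.2})) := by
    have := tendsto_measure_iInter_atTop (μ := μ.prod μ)
      (s := fun n => {q : ℝ × ℝ | 2 * s n ≤ q.1 + q.2})
      (fun n => (hBmeas _).nullMeasurableSet)
      (fun n m h q hq => by
        have hsle : s n ≤ s m := hmono h
        simp only [mem_setOf_eq] at hq ⊢
        nlinarith)
      ⟨0, measure_ne_top _ _⟩
    rw [hBinter] at this
    exact this
  have hdenR : Tendsto (fun n => ((μ.prod μ) {q : ℝ × ℝ | 2 * s n ≤ q.1 + q.2}).toReal)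
      atTop (𝓝 D) :=
    (ENNReal.tendsto_toReal (measure_ne_top _ _)).comp hden'
  -- the explicit limit
  have hL' : Tendsto (fun n => ρ (s n)) atTop
      (𝓝 ((μ (Ici x)).toReal ^ 2 / D - (1 - r))) := by
    simp only [hρ]
    exact (((hnumR.pow 2).div hdenR hDpos.ne').sub tendsto_const_nhds)
  have hLeq : L = (μ (Ici x)).toReal ^ 2 / D - (1 - r) :=
    tendsto_nhds_unique hL hL'
  -- split Ici x
  have hsplit : μ (Ici x) = μ {x} + μ (Ioi x) := by
    have hI : Ici x = {x} ∪ Ioi x := by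
      ext y; simp [le_iff_lt_or_eq, eq_comm, or_comm]
    rw [hI, measure_union (Set.disjoint_singleton_left.mpr (by simp)) measurableSet_Ioi]
  have hsplitR : (μ (Ici x)).toReal = (μ {x}).toReal + (μ (Ioi x)).toReal := by
    rw [hsplit, ENNReal.toReal_add (measure_ne_top _ _) (measure_ne_top _ _)]
  set a := (μ (Ioi x)).toReal with ha
  set c := (μ {x}).toReal with hc
  have hanneg : 0 ≤ a := ENNReal.toReal_nonneg
  have hcnneg : 0 ≤ c := ENNReal.toReal_nonneg
  have hρx : ρ x = a ^ 2 / D - (1 - r) := by rw [hρ]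
  have hLv : L = (c + a) ^ 2 / D - (1 - r) := by rw [hLeq, hsplitR]
  constructor
  · rw [hρx, hLv]
    have h2 : a ^ 2 ≤ (c + a) ^ 2 := by nlinarith
    have hdiv : a ^ 2 / D ≤ (c + a) ^ 2 / D := by gcongr
    linarith
  · rw [hρx, hLv]
    constructor
    · intro h
      by_contra hμ
      push_neg at hμ
      have : μ {x} = 0 := le_antisymm hμ zero_le
      have hc0 : c = 0 := by simp [hc, this]
      rw [hc0] at h; simp at h
    · intro hμ
      have hcpos : 0 < c := by
        rw [hc]
        exact ENNReal.toReal_pos hμ.ne' (measure_ne_top _ _)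
      have : a ^ 2 < (c + a) ^ 2 := by nlinarith
      have hdiv : a ^ 2 / D < (c + a) ^ 2 / D :=
        div_lt_div_of_pos_right this hDpos
      linarith
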